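/- arXiv:2311.10074 — 2 statements merged into one kernel-verified Lean document; each statement's English description precedes it below -/
import Mathlib

section
/- For every s ∈ ℝ, the operator Q(s) is self-adjoint and Q(s) − id_H is a compact operator. -/
variable {H : Type*} [NormedAddCommGroup H] [InnerProductSpace ℝ H] [CompleteSpace H]

/-- `Dco T s = ∑_{k=0}^∞ ((-1)^k s^{2k} / (2k)!) • T^k`. -/
noncomputable def Dco (T : H →L[ℝ] H) (s : ℝ) : H →L[ℝ] H :=
  ∑' k : ℕ, ((-1 : ℝ) ^ k * s ^ (2 * k) / (Nat.factorial (2 * k) : ℝ)) • T ^ k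

/-- `Dsi T s = ∑_{k=0}^∞ ((-1)^k s^{2k} / (2k+1)!) • T^k`. -/
noncomputable def Dsi (T : H →L[ℝ] H) (s : ℝ) : H →L[ℝ] H :=
  ∑' k : ℕ, ((-1 : ℝ) ^ k * s ^ (2 * k) / (Nat.factorial (2 * k + 1) : ℝ)) • T ^ k

/-- The focal-point operator `Q(s) = Dco(s) - s • (Dsi(s) ∘ S)`. -/
noncomputable def Qop (T S : H →L[ℝ] H) (s : ℝ) : H →L[ℝ] H :=
  Dco T s - s • (Dsi T s ∘L S)

/-- The scalar Jacobi solution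
`c_{λ,μ}(s) = ∑ (-1)^k s^{2k} λ^k/(2k)! - s·μ·∑ (-1)^k s^{2k} λ^k/(2k+1)!`. -/
noncomputable def cJacobi (lam mu : ℝ) (s : ℝ) : ℝ :=
  (∑' k : ℕ, (-1 : ℝ) ^ k * s ^ (2 * k) * lam ^ k / (Nat.factorial (2 * k) : ℝ)) -
    s * mu * ∑' k : ℕ, (-1 : ℝ) ^ k * s ^ (2 * k) * lam ^ k / (Nat.factorial (2 * k + 1) : ℝ)

set_option linter.unusedSectionVars false
set_option linter.unusedVariables false

lemma norm_pow_le_aux (T : H →L[ℝ] H) (k : ℕ) : ‖T ^ k‖ ≤ ‖T‖ ^ k := by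
  cases k with
  | zero => rw [pow_zero, pow_zero]; exact ContinuousLinearMap.norm_id_le
  | succ n => exact norm_pow_le' T n.succ_pos

lemma summable_smul_pow (T : H →L[ℝ] H) (C x : ℝ) {a : ℕ → ℝ}
    (ha : ∀ k, |a k| ≤ C * x ^ k / (Nat.factorial k : ℝ)) :
    Summable fun k : ℕ => a k • T ^ k := by
  apply Summable.of_norm_bounded (g := fun k : ℕ => C * (x * ‖T‖) ^ k / (Nat.factorial k : ℝ))
    (((Real.summable_pow_div_factorial (x * ‖T‖)).mul_left C).congr (fun k => by ring))
  intro k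
  rw [norm_smul (a k) (T ^ k), Real.norm_eq_abs]
  calc |a k| * ‖T ^ k‖ ≤ (C * x ^ k / (Nat.factorial k : ℝ)) * ‖T‖ ^ k := by
        apply mul_le_mul (ha k) (norm_pow_le_aux T k) (norm_nonneg _)
        exact le_trans (abs_nonneg _) (ha k)
    _ = C * (x * ‖T‖) ^ k / (Nat.factorial k : ℝ) := by
        rw [mul_pow]; ring

lemma abs_coeff_le (s : ℝ) (j k n : ℕ) (h : k ≤ n) :
    |(-1 : ℝ) ^ j * s ^ (2 * k) / (Nat.factorial n : ℝ)| ≤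
      (s ^ 2) ^ k / (Nat.factorial k : ℝ) := by
  rw [abs_div, abs_mul, abs_pow, abs_pow, abs_neg, abs_one, one_pow, one_mul,
    abs_of_nonneg (by positivity : (0:ℝ) ≤ (Nat.factorial n : ℝ)),
    pow_mul, ← abs_pow, abs_of_nonneg (sq_nonneg s)]
  have h1 : (Nat.factorial k : ℝ) ≤ (Nat.factorial n : ℝ) := by
    exact_mod_cast Nat.factorial_le h
  exact div_le_div_of_nonneg_left (by positivity) (by positivity) h1

set_option synthInstance.maxHeartbeats 1000000 in
/-- For every `s ∈ ℝ` the operator `Q(s)` is self-adjoint and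
`Q(s) - id` is a compact operator. -/
theorem Qop_selfAdjoint_and_compact_perturbation_of_id
    (T S : H →L[ℝ] H)
    (hTc : IsCompactOperator T) (hSc : IsCompactOperator S)
    (hTsa : IsSelfAdjoint T) (hSsa : IsSelfAdjoint S)
    (hcomm : T ∘L S = S ∘L T) :
    ∀ s : ℝ, IsSelfAdjoint (Qop T S s) ∧
      IsCompactOperator (Qop T S s - (1 : H →L[ℝ] H)) := by
  intro s
  set a : ℕ → ℝ := fun k => (-1 : ℝ) ^ k * s ^ (2 * k) / (Nat.factorial (2 * k) : ℝ) with ha_def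
  set b : ℕ → ℝ := fun k => (-1 : ℝ) ^ k * s ^ (2 * k) / (Nat.factorial (2 * k + 1) : ℝ)
    with hb_def
  have hCo : Summable fun k : ℕ => a k • T ^ k :=
    summable_smul_pow T 1 (s ^ 2) (fun k => by
      simpa using abs_coeff_le s k k (2 * k) (by omega))
  have hSi : Summable fun k : ℕ => b k • T ^ k :=
    summable_smul_pow T 1 (s ^ 2) (fun k => by
      simpa using abs_coeff_le s k k (2 * k + 1) (by omega))
  have hCoShift : Summable fun k : ℕ => a (k + 1) • T ^ k := by
    apply summable_smul_pow T (s ^ 2) (s ^ 2)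
    intro k
    have h1 := abs_coeff_le s (k + 1) (k + 1) (2 * (k + 1)) (by omega)
    refine h1.trans ?_
    have h2 : (Nat.factorial k : ℝ) ≤ (Nat.factorial (k + 1) : ℝ) := by
      exact_mod_cast Nat.factorial_le (by omega)
    calc (s ^ 2) ^ (k + 1) / (Nat.factorial (k + 1) : ℝ)
        ≤ (s ^ 2) ^ (k + 1) / (Nat.factorial k : ℝ) :=
          div_le_div_of_nonneg_left (by positivity) (by positivity) h2
      _ = s ^ 2 * (s ^ 2) ^ k / (Nat.factorial k : ℝ) := by rw [pow_succ]; ring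
  -- star of each term
  have hstar : ∀ (c : ℝ) (k : ℕ), star (c • T ^ k) = c • T ^ k := fun c k => by
    rw [star_smul, star_pow, hTsa.star_eq, star_trivial]
  have hDcoSA : IsSelfAdjoint (Dco T s) := by
    rw [IsSelfAdjoint, Dco, tsum_star]
    exact tsum_congr fun k => hstar _ k
  have hDsiSA : IsSelfAdjoint (Dsi T s) := by
    rw [IsSelfAdjoint, Dsi, tsum_star]
    exact tsum_congr fun k => hstar _ k
  -- commutation of Dsi with S
  have hcomm' : Commute T S := hcomm
  have hDsiComm : Dsi T s * S = S * Dsi T s := by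
    rw [Dsi, ← (hSi.tsum_mul_right S), ← (hSi.tsum_mul_left S)]
    refine tsum_congr fun k => ?_
    rw [smul_mul_assoc, mul_smul_comm, (hcomm'.pow_left k).eq]
  have hSdsiSA : IsSelfAdjoint (Dsi T s ∘L S) := by
    show star (Dsi T s * S) = Dsi T s * S
    rw [star_mul, hSsa.star_eq, hDsiSA.star_eq, ← hDsiComm]
  constructor
  · have : IsSelfAdjoint (s • (Dsi T s ∘L S)) := by
      rw [IsSelfAdjoint, star_smul, star_trivial, hSdsiSA.star_eq]
    exact hDcoSA.sub this
  · -- compactness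
    have hDsiS : IsCompactOperator ((Dsi T s ∘L S : H →L[ℝ] H) : H → H) := by
      have := hSc.continuous_comp (Dsi T s).continuous
      exact this
    have hDsiS' : IsCompactOperator ((s • (Dsi T s ∘L S) : H →L[ℝ] H) : H → H) := by
      have := hDsiS.smul s
      simpa using this
    -- Dco - 1 = T * R
    have hkey : Dco T s = 1 + T * (∑' k : ℕ, a (k + 1) • T ^ k) := by
      rw [Dco, hCo.tsum_eq_zero_add]
      congr 1
      · simp [ha_def]
      · rw [← hCoShift.tsum_mul_left T]
        exact tsum_congr fun k => by rw [pow_succ', mul_smul_comm]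
    have hDco1 : IsCompactOperator ((Dco T s - 1 : H →L[ℝ] H) : H → H) := by
      have h1 : Dco T s - 1 = T * (∑' k : ℕ, a (k + 1) • T ^ k) := by
        rw [hkey]; abel
      rw [h1]
      have := hTc.comp_clm (∑' k : ℕ, a (k + 1) • T ^ k)
      simpa [Function.comp] using this
    have hfinal : Qop T S s - 1 = (Dco T s - 1) - s • (Dsi T s ∘L S) := by
      rw [Qop]; abel
    rw [hfinal]
    have := hDco1.sub hDsiS'
    simpa using this
end

section
/- For every s ∈ ℝ, the kernel ker Q(s) is a finite-dimensional subspace of H. (In particular every focal radius along the normal geodesic has finite multiplicity.) -/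
variable {H : Type*} [NormedAddCommGroup H] [InnerProductSpace ℝ H] [CompleteSpace H]

set_option linter.unusedSectionVars false in
lemma norm_pow_le_clm (T : H →L[ℝ] H) : ∀ k, ‖T ^ k‖ ≤ ‖T‖ ^ k := by
  intro k
  induction k with
  | zero => rw [pow_zero, pow_zero]; exact ContinuousLinearMap.norm_id_le
  | succ n ih =>
    calc ‖T ^ (n + 1)‖ = ‖T ^ n * T‖ := by rw [pow_succ]
    _ ≤ ‖T ^ n‖ * ‖T‖ := norm_mul_le _ _
    _ ≤ ‖T‖ ^ n * ‖T‖ := by gcongr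
    _ = ‖T‖ ^ (n + 1) := (pow_succ _ _).symm

lemma summable_jacobi (T : H →L[ℝ] H) (s : ℝ) (n : ℕ → ℕ) (hn : ∀ k, k ≤ n k) :
    Summable fun k : ℕ =>
      ((-1 : ℝ) ^ k * s ^ (2 * k) / (Nat.factorial (n k) : ℝ)) • T ^ k := by
  apply Summable.of_norm
  apply Summable.of_nonneg_of_le (fun k => norm_nonneg _) ?_
    (Real.summable_pow_div_factorial (s ^ 2 * ‖T‖))
  intro k
  rw [norm_smul ((-1 : ℝ) ^ k * s ^ (2 * k) / (Nat.factorial (n k) : ℝ)) (T ^ k)]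
  refine ?_
  have h1 : ‖(-1 : ℝ) ^ k * s ^ (2 * k) / (Nat.factorial (n k) : ℝ)‖
      ≤ (s ^ 2) ^ k / (Nat.factorial k : ℝ) := by
    rw [Real.norm_eq_abs, abs_div, Nat.abs_cast, abs_mul, abs_pow,
      abs_pow, abs_neg, abs_one, one_pow, one_mul, pow_mul, sq_abs]
    apply div_le_div_of_nonneg_left (by positivity) (by positivity)
    exact_mod_cast Nat.factorial_le (hn k)
  calc ‖(-1 : ℝ) ^ k * s ^ (2 * k) / (Nat.factorial (n k) : ℝ)‖ * ‖T ^ k‖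
      ≤ ((s ^ 2) ^ k / (Nat.factorial k : ℝ)) * ‖T‖ ^ k := by
        apply mul_le_mul h1 (norm_pow_le_clm T k) (norm_nonneg _) (by positivity)
    _ = (s ^ 2 * ‖T‖) ^ k / (Nat.factorial k : ℝ) := by ring

lemma isCompactOperator_tsum {f : ℕ → H →L[ℝ] H} (hs : Summable f)
    (hc : ∀ k, IsCompactOperator (f k)) : IsCompactOperator (⇑(∑' k, f k)) := by
  refine isCompactOperator_of_tendsto hs.hasSum.tendsto_sum_nat ?_
  filter_upwards with n
  induction n with
  | zero => simpa using isCompactOperator_zero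
  | succ m ih =>
    rw [Finset.sum_range_succ, ContinuousLinearMap.coe_add']
    exact ih.add (hc m)

/-- For every `s ∈ ℝ` the kernel of `Q(s)` is finite dimensional;
in particular every focal radius has finite multiplicity. -/
theorem Qop_ker_finiteDimensional
    (T S : H →L[ℝ] H)
    (hTc : IsCompactOperator T) (hSc : IsCompactOperator S)
    (hTsa : IsSelfAdjoint T) (hSsa : IsSelfAdjoint S)
    (hcomm : T ∘L S = S ∘L T) :
    ∀ s : ℝ, FiniteDimensional ℝ (LinearMap.ker (Qop T S s : H →ₗ[ℝ] H)) := by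
  simp only [Qop]
  intro s
  set a : ℕ → (H →L[ℝ] H) :=
    fun k => ((-1 : ℝ) ^ k * s ^ (2 * k) / (Nat.factorial (2 * k) : ℝ)) • T ^ k with ha
  have hsa : Summable a := summable_jacobi T s (fun k => 2 * k) (fun k => by omega)
  have hpow : ∀ k : ℕ, IsCompactOperator ⇑(T ^ (k + 1)) := by
    intro k
    rw [pow_succ, ContinuousLinearMap.mul_def, ContinuousLinearMap.coe_comp']
    exact hTc.continuous_comp (T ^ k).continuous
  have hC1 : IsCompactOperator ⇑(∑' k, a (k + 1)) := by
    refine isCompactOperator_tsum ((summable_nat_add_iff 1).mpr hsa) (fun k => ?_)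
    rw [ha, ContinuousLinearMap.coe_smul']
    exact (hpow k).smul _
  have hDcoEq : Dco T s = 1 + ∑' k, a (k + 1) := by
    rw [Dco, Summable.tsum_eq_zero_add hsa]
    congr 1
    simp [ha]
  have hDsiS : IsCompactOperator ⇑(Dsi T s ∘L S) := by
    rw [ContinuousLinearMap.coe_comp']
    exact hSc.continuous_comp (Dsi T s).continuous
  set K : H →L[ℝ] H := s • (Dsi T s ∘L S) - ∑' k, a (k + 1) with hKdef
  have hK : IsCompactOperator ⇑K := by
    rw [hKdef, ContinuousLinearMap.coe_sub', ContinuousLinearMap.coe_smul']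
    exact (hDsiS.smul s).sub hC1
  have hQ : Dco T s - s • (Dsi T s ∘L S) = 1 - K := by
    rw [hDcoEq, hKdef]; abel
  set N := LinearMap.ker (Qop T S s : H →ₗ[ℝ] H) with hN
  have hfix : ∀ x : H, x ∈ N → x = K x := by
    intro x hx
    have h0 : (Dco T s - s • (Dsi T s ∘L S)) x = 0 := hx
    rw [hQ] at h0
    have hxK : x - K x = 0 := by simpa using h0
    exact sub_eq_zero.mp hxK
  obtain ⟨C, hCcomp, hCsub⟩ :=
    hK.image_closedBall_subset_compact (1 : ℝ)
  have himg : Subtype.val '' Metric.closedBall (0 : N) 1 =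
      (N : Set H) ∩ Metric.closedBall (0 : H) 1 := by
    ext x
    constructor
    · rintro ⟨y, hy, rfl⟩
      refine ⟨y.2, ?_⟩
      simpa [Metric.mem_closedBall, dist_eq_norm] using hy
    · rintro ⟨hxN, hx1⟩
      exact ⟨⟨x, hxN⟩, by simpa [Metric.mem_closedBall, dist_eq_norm] using hx1, rfl⟩
  have hVclosed : IsClosed (Subtype.val '' Metric.closedBall (0 : N) 1) := by
    rw [himg]
    exact (ContinuousLinearMap.isClosed_ker (Qop T S s)).inter Metric.isClosed_closedBall
  have hVsub : Subtype.val '' Metric.closedBall (0 : N) 1 ⊆ C := by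
    rw [himg]
    rintro x ⟨hxN, hx1⟩
    have hxK := hfix x hxN
    exact hCsub ⟨x, hx1, hxK.symm⟩
  have hVcompact : IsCompact (Metric.closedBall (0 : N) 1) :=
    Subtype.isCompact_iff.mpr (hCcomp.of_isClosed_subset hVclosed hVsub)
  haveI : NormedSpace ℝ N := Submodule.normedSpace N
  exact (show FiniteDimensional ℝ N from
    FiniteDimensional.of_isCompact_closedBall₀ ℝ one_pos hVcompact)
end
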